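/- Fix integers i < j and m ≥ 1, and consider the graph on the integers whose edges are the m pairs {i, j}, {i+1, j+1}, …, {i+m−1, j+m−1}. This graph is acyclic; consequently, for independent fair coin bits, the probability that C_{i+ℓ} = C_{j+ℓ} for all 0 ≤ ℓ < m equals 2^{−m}. -/

import Mathlib

lemma stmt9_acyclic (i j m : ℕ) (hij : i < j) :
    (SimpleGraph.fromRel (fun a b : ℕ => ∃ ℓ < m, a = i + ℓ ∧ b = j + ℓ)).IsAcyclic := by
  set G := SimpleGraph.fromRel (fun a b : ℕ => ∃ ℓ < m, a = i + ℓ ∧ b = j + ℓ) with hG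
  set d := j - i with hd
  have hd0 : 0 < d := by omega
  have hadj : ∀ a b : ℕ, G.Adj a b →
      ∃ ℓ < m, (a = i + ℓ ∧ b = a + d) ∨ (b = i + ℓ ∧ a = b + d) := by
    rintro a b ⟨hne, h | h⟩ <;> obtain ⟨ℓ, hℓ, h1, h2⟩ := h
    · exact ⟨ℓ, hℓ, Or.inl ⟨h1, by omega⟩⟩
    · exact ⟨ℓ, hℓ, Or.inr ⟨h1, by omega⟩⟩
  have key : ∀ x : ℕ, ¬ (G \ SimpleGraph.fromEdgeSet {s(x, x + d)}).Reachable x (x + d) := by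
    intro x hr
    obtain ⟨w⟩ := hr
    set Side : ℕ → Prop := fun v => v % d = x % d → v ≤ x with hSide
    have step : ∀ u v : ℕ, (G \ SimpleGraph.fromEdgeSet {s(x, x + d)}).Adj u v →
        (Side u ↔ Side v) := by
      intro u v huv
      rw [SimpleGraph.sdiff_adj] at huv
      obtain ⟨hG1, hG2⟩ := huv
      rw [SimpleGraph.fromEdgeSet_adj] at hG2
      have hne : u ≠ v := hG1.ne
      have hnot : ¬ (s(u, v) = s(x, x + d)) := by
        intro h; exact hG2 ⟨by simp [h], hne⟩
      rw [Sym2.eq_iff] at hnot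
      push_neg at hnot
      obtain ⟨ℓ, hℓ, h | h⟩ := hadj u v hG1
      · obtain ⟨h1, h2⟩ := h
        have hux : u ≠ x := by
          intro h; exact (hnot.1 h).elim (by omega)
        subst h2
        simp only [hSide, Nat.add_mod_right]
        by_cases hmod : u % d = x % d
        · have hiff : u ≤ x ↔ u + d ≤ x := by
            rcases Nat.lt_or_ge u x with hlt | hge
            · have hdvd : d ∣ x - u := (Nat.modEq_iff_dvd' hlt.le).mp hmod
              have h2 := Nat.le_of_dvd (by omega) hdvd
              constructor <;> intro h <;> omega
            · constructor <;> intro h <;> omega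
          simp only [hmod, eq_self_iff_true, true_implies]
          exact hiff
        · simp [hmod]
      · obtain ⟨h1, h2⟩ := h
        have hux : v ≠ x := by
          intro h; exact hnot.2 (by omega) h
        subst h2
        simp only [hSide, Nat.add_mod_right]
        by_cases hmod : v % d = x % d
        · have hiff : v ≤ x ↔ v + d ≤ x := by
            rcases Nat.lt_or_ge v x with hlt | hge
            · have hdvd : d ∣ x - v := (Nat.modEq_iff_dvd' hlt.le).mp hmod
              have h2 := Nat.le_of_dvd (by omega) hdvd
              constructor <;> intro h <;> omega
            · constructor <;> intro h <;> omega
          simp only [hmod, eq_self_iff_true, true_implies]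
          exact hiff.symm
        · simp [hmod]
    have winv : ∀ {u v : ℕ} (p : (G \ SimpleGraph.fromEdgeSet {s(x, x + d)}).Walk u v),
        Side u ↔ Side v := by
      intro u v p
      induction p with
      | nil => rfl
      | cons h p ih => exact (step _ _ h).trans ih
    have h1 : Side x := fun _ => le_refl x
    have h2 : ¬ Side (x + d) := by
      intro h
      have := h (Nat.add_mod_right x d)
      omega
    exact h2 ((winv w).mp h1)
  rw [SimpleGraph.isAcyclic_iff_forall_adj_isBridge]
  intro u v huv
  obtain ⟨ℓ, hℓ, h | h⟩ := hadj u v huv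
  · obtain ⟨h1, h2⟩ := h
    subst h2
    exact SimpleGraph.isBridge_iff.mpr (key u)
  · obtain ⟨h1, h2⟩ := h
    subst h2
    rw [Sym2.eq_swap]
    exact SimpleGraph.isBridge_iff.mpr (key v)

lemma stmt9_count (i j M : ℕ) (hij : i < j) :
    ∀ m, j + m ≤ M →
    ((Finset.univ : Finset (Fin M → Bool)).filter
        (fun C =>
          let D : ℕ → Bool := fun a => if h : a < M then C ⟨a, h⟩ else false
          ∀ ℓ ∈ Finset.range m, D (i + ℓ) = D (j + ℓ))).card * 2 ^ m
      = 2 ^ M := by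
  intro m
  induction m with
  | zero =>
    intro _
    simp [Finset.filter_true_of_mem]
  | succ m ih =>
    intro hM1
    have hM0 : j + m ≤ M := by omega
    have hjm : j + m < M := by omega
    have him : i + m < M := by omega
    set Dd : (Fin M → Bool) → ℕ → Bool := fun C a => if h : a < M then C ⟨a, h⟩ else false
      with hDd
    set A : ℕ → Finset (Fin M → Bool) := fun n =>
      (Finset.univ : Finset (Fin M → Bool)).filter
        (fun C => ∀ ℓ ∈ Finset.range n, Dd C (i + ℓ) = Dd C (j + ℓ)) with hA
    have memA : ∀ n C, C ∈ A n ↔ ∀ ℓ < n, Dd C (i + ℓ) = Dd C (j + ℓ) := by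
      intro n C
      simp [hA]
    -- the flip map
    set x : Fin M := ⟨j + m, hjm⟩ with hx
    set e : (Fin M → Bool) → (Fin M → Bool) := fun C => Function.update C x (!C x) with he
    have hDde : ∀ C a, a ≠ j + m → Dd (e C) a = Dd C a := by
      intro C a ha
      simp only [hDd, he]
      split
      · rw [Function.update_of_ne]
        intro h
        apply ha
        exact congrArg Fin.val h
      · rfl
    have hDdx : ∀ C, Dd (e C) (j + m) = !(Dd C (j + m)) := by
      intro C
      simp only [hDd, he, dif_pos hjm]
      have : (⟨j + m, hjm⟩ : Fin M) = x := rfl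
      rw [this, Function.update_self]
    have hpres : ∀ C, (∀ ℓ < m, Dd C (i + ℓ) = Dd C (j + ℓ)) ↔
        (∀ ℓ < m, Dd (e C) (i + ℓ) = Dd (e C) (j + ℓ)) := by
      intro C
      apply forall₂_congr
      intro ℓ hℓ
      rw [hDde C (i + ℓ) (by omega), hDde C (j + ℓ) (by omega)]
    have hlast : ∀ C, Dd (e C) (i + m) = Dd (e C) (j + m) ↔
        ¬ (Dd C (i + m) = Dd C (j + m)) := by
      intro C
      rw [hDde C (i + m) (by omega), hDdx C]
      cases hb : Dd C (i + m) <;> cases hc : Dd C (j + m) <;> simp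
    have hsplit : ∀ C, C ∈ A (m + 1) ↔ C ∈ A m ∧ Dd C (i + m) = Dd C (j + m) := by
      intro C
      rw [memA, memA]
      constructor
      · intro h
        exact ⟨fun ℓ hℓ => h ℓ (by omega), h m (by omega)⟩
      · rintro ⟨h1, h2⟩ ℓ hℓ
        rcases Nat.lt_or_ge ℓ m with h | h
        · exact h1 ℓ h
        · have : ℓ = m := by omega
          subst this; exact h2
    have hsub : A (m + 1) ⊆ A m := fun C hC => ((hsplit C).mp hC).1
    have einv : ∀ C, e (e C) = C := by
      intro C
      funext a
      by_cases h : a = x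
      · subst h; simp [he]
      · simp [he, Function.update_of_ne h]
    -- bijection between A (m+1) and A m \ A (m+1) via e
    have hbij : (A (m + 1)).card = (A m \ A (m + 1)).card := by
      apply Finset.card_bij' (fun C _ => e C) (fun C _ => e C)
      · intro C hC
        rw [Finset.mem_sdiff]
        rw [hsplit] at hC
        obtain ⟨h1, h2⟩ := hC
        constructor
        · rw [memA] at h1 ⊢
          exact ((hpres C).mp h1)
        · rw [hsplit]
          rintro ⟨-, hcon⟩
          rw [hlast] at hcon
          exact hcon h2
      · intro C hC
        rw [Finset.mem_sdiff] at hC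
        obtain ⟨h1, h2⟩ := hC
        rw [hsplit]
        constructor
        · rw [memA] at h1 ⊢
          exact ((hpres C).mp h1)
        · rw [hlast]
          intro hcon
          apply h2
          rw [hsplit]
          exact ⟨h1, hcon⟩
      · intro C _
        exact einv C
      · intro C _
        exact einv C
    have hcard : (A m).card = 2 * (A (m + 1)).card := by
      have := Finset.card_sdiff_add_card_eq_card hsub
      omega
    have goalA : (A m).card * 2 ^ m = 2 ^ M := ih hM0
    calc (A (m + 1)).card * 2 ^ (m + 1)
        = (2 * (A (m + 1)).card) * 2 ^ m := by ring
      _ = (A m).card * 2 ^ m := by rw [hcard]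
      _ = 2 ^ M := goalA

/-- Fix `i < j` and `m ≥ 1`. The graph on the integers with the `m` edges
`{i+ℓ, j+ℓ}`, `0 ≤ ℓ < m`, is acyclic; consequently, for `M ≥ j + m`
independent fair coin bits, the probability that `C_{i+ℓ} = C_{j+ℓ}` for all
`0 ≤ ℓ < m` equals `2^{-m}`. -/
theorem stmt9 (i j m M : ℕ) (hij : i < j) (hm : 1 ≤ m) (hM : j + m ≤ M) :
    (SimpleGraph.fromRel (fun a b : ℕ => ∃ ℓ < m, a = i + ℓ ∧ b = j + ℓ)).IsAcyclic
    ∧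
    ((Finset.univ : Finset (Fin M → Bool)).filter
        (fun C =>
          let D : ℕ → Bool := fun a => if h : a < M then C ⟨a, h⟩ else false
          ∀ ℓ ∈ Finset.range m, D (i + ℓ) = D (j + ℓ))).card * 2 ^ m
      = 2 ^ M := by
  exact ⟨stmt9_acyclic i j m hij, stmt9_count i j M hij m hM⟩
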